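/- Let y and y_n (n ≥ 1) be real-valued functions on ℚ₂ × [0,1] that are nondecreasing in the first variable (r₁ ≤ r₂ implies y(r₁,t) ≤ y(r₂,t) for all t, and likewise for each y_n). Define ỹ(u,t) = inf{y(r,t) : r ∈ ℚ₂, r > u} for u ∈ [0,1) and ỹ(1,t) = y(1,t), and define ỹ_n analogously. Suppose that for every r ∈ ℚ₂, sup_{t∈[0,1]} |y_n(r,t) − y(r,t)| → 0 as n → ∞. Then for every ε > 0 there exists N such that for all n ≥ N, all t ∈ [0,1]: (i) for all u ∈ [0,1), ỹ_n(u,t) ≤ ỹ(min(u+ε,1),t) + ε and ỹ(u,t) ≤ ỹ_n(min(u+ε,1),t) + ε; (ii) for all u ∈ [ε,1], ỹ_n(u,t) ≥ ỹ(u−ε,t) − ε and ỹ(u,t) ≥ ỹ_n(u−ε,t) − ε. (This expresses that the map y ↦ ỹ is continuous from pointwise-in-r, uniform-in-t convergence to the uniform-in-t Lévy distance.) -/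
import Mathlib


open Filter Topology

noncomputable section

/-- The set `ℚ₂ = {k/2^n : n ≥ 1, 0 ≤ k ≤ 2^n}` of dyadic rational points of `[0,1]`. -/
def dyadics : Set ℝ :=
  {x | ∃ n : ℕ, 1 ≤ n ∧ ∃ k : ℕ, k ≤ 2 ^ n ∧ x = (k : ℝ) / 2 ^ n}

/-- The right-continuous extension `ỹ(u,t) = inf {y(r,t) : r ∈ ℚ₂, r > u}` for
`u ∈ [0,1)`, and `ỹ(1,t) = y(1,t)`. -/
def rcExt (y : ℝ → ℝ → ℝ) (u t : ℝ) : ℝ :=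
  if u < 1 then sInf {v | ∃ r ∈ dyadics, u < r ∧ v = y r t} else y 1 t

lemma grid_mem_dyadics {m k : ℕ} (hm : 1 ≤ m) (hk : k ≤ 2 ^ m) :
    ((k : ℝ) / 2 ^ m) ∈ dyadics := ⟨m, hm, k, hk, rfl⟩

lemma zero_mem_dyadics : (0 : ℝ) ∈ dyadics := ⟨1, le_refl 1, 0, by norm_num, by norm_num⟩

lemma one_mem_dyadics : (1 : ℝ) ∈ dyadics := ⟨1, le_refl 1, 2, by norm_num, by norm_num⟩

lemma dyadics_nonneg {r : ℝ} (hr : r ∈ dyadics) : 0 ≤ r := by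
  obtain ⟨n, -, k, -, rfl⟩ := hr; positivity

lemma dyadics_le_one {r : ℝ} (hr : r ∈ dyadics) : r ≤ 1 := by
  obtain ⟨n, -, k, hk, rfl⟩ := hr
  rw [div_le_one (by positivity)]
  exact_mod_cast hk

lemma rcSet_nonempty (y : ℝ → ℝ → ℝ) {u : ℝ} (hu : u < 1) (t : ℝ) :
    {v | ∃ r ∈ dyadics, u < r ∧ v = y r t}.Nonempty :=
  ⟨y 1 t, 1, one_mem_dyadics, hu, rfl⟩

lemma rcSet_bddBelow (y : ℝ → ℝ → ℝ)
    (hmono : ∀ r₁ ∈ dyadics, ∀ r₂ ∈ dyadics, r₁ ≤ r₂ →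
      ∀ t ∈ Set.Icc (0 : ℝ) 1, y r₁ t ≤ y r₂ t)
    {u : ℝ} (hu : 0 ≤ u) {t : ℝ} (ht : t ∈ Set.Icc (0 : ℝ) 1) :
    BddBelow {v | ∃ r ∈ dyadics, u < r ∧ v = y r t} := by
  refine ⟨y 0 t, ?_⟩
  rintro v ⟨r, hr, hur, rfl⟩
  exact hmono 0 zero_mem_dyadics r hr (le_of_lt (lt_of_le_of_lt hu hur)) t ht

lemma rcExt_le (y : ℝ → ℝ → ℝ)
    (hmono : ∀ r₁ ∈ dyadics, ∀ r₂ ∈ dyadics, r₁ ≤ r₂ →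
      ∀ t ∈ Set.Icc (0 : ℝ) 1, y r₁ t ≤ y r₂ t)
    {u : ℝ} (hu0 : 0 ≤ u) (hu : u < 1) {t : ℝ} (ht : t ∈ Set.Icc (0 : ℝ) 1)
    {r : ℝ} (hr : r ∈ dyadics) (hur : u < r) :
    rcExt y u t ≤ y r t := by
  rw [rcExt, if_pos hu]
  exact csInf_le (rcSet_bddBelow y hmono hu0 ht) ⟨r, hr, hur, rfl⟩

/-- There is a grid point just above `a`. -/
lemma grid_succ (m : ℕ) {a : ℝ} (ha : 0 ≤ a) (ha1 : a < 1) :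
    ∃ k : ℕ, k ≤ 2 ^ m ∧ a < (k : ℝ) / 2 ^ m ∧ (k : ℝ) / 2 ^ m ≤ a + 1 / 2 ^ m := by
  refine ⟨⌊a * 2 ^ m⌋₊ + 1, ?_, ?_, ?_⟩
  · have : ⌊a * 2 ^ m⌋₊ < 2 ^ m := by
      rw [Nat.floor_lt (by positivity)]
      calc a * 2 ^ m < 1 * 2 ^ m := by
            exact mul_lt_mul_of_pos_right ha1 (by positivity)
        _ = ((2 ^ m : ℕ) : ℝ) := by push_cast; ring
    omega
  · rw [lt_div_iff₀ (by positivity)]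
    push_cast
    exact Nat.lt_floor_add_one _
  · rw [div_le_iff₀ (by positivity)]
    have := Nat.floor_le (show (0:ℝ) ≤ a * 2 ^ m by positivity)
    push_cast
    have h2 : (0:ℝ) < 2 ^ m := by positivity
    field_simp
    linarith

/-- The key one-sided estimate. -/
lemma rcExt_key (A B : ℝ → ℝ → ℝ)
    (hA : ∀ r₁ ∈ dyadics, ∀ r₂ ∈ dyadics, r₁ ≤ r₂ →
      ∀ t ∈ Set.Icc (0 : ℝ) 1, A r₁ t ≤ A r₂ t)
    (hB : ∀ r₁ ∈ dyadics, ∀ r₂ ∈ dyadics, r₁ ≤ r₂ →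
      ∀ t ∈ Set.Icc (0 : ℝ) 1, B r₁ t ≤ B r₂ t)
    {t : ℝ} (ht : t ∈ Set.Icc (0 : ℝ) 1) {ε : ℝ}
    {q : ℝ} (hq : q ∈ dyadics) (hABq : A q t ≤ B q t + ε)
    {a b : ℝ} (ha0 : 0 ≤ a) (ha1 : a < 1) (hb1 : b ≤ 1)
    (haq : a < q) (hqr : ∀ r ∈ dyadics, b ≤ r → q ≤ r) :
    rcExt A a t ≤ rcExt B b t + ε := by
  have hAq : rcExt A a t ≤ A q t := rcExt_le A hA ha0 ha1 ht hq haq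
  rcases lt_or_eq_of_le hb1 with hb | hb
  · have hBb : rcExt B b t = sInf {v | ∃ r ∈ dyadics, b < r ∧ v = B r t} := by
      rw [rcExt, if_pos hb]
    rw [hBb]
    have : rcExt A a t - ε ≤ sInf {v | ∃ r ∈ dyadics, b < r ∧ v = B r t} := by
      apply le_csInf (rcSet_nonempty B hb t)
      rintro v ⟨r, hr, hbr, rfl⟩
      have hqle : q ≤ r := hqr r hr hbr.le
      have := hB q hq r hr hqle t ht
      linarith
    linarith
  · subst hb
    have hBb : rcExt B 1 t = B 1 t := by rw [rcExt, if_neg (lt_irrefl 1)]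
    rw [hBb]
    have hq1 : q ≤ 1 := hqr 1 one_mem_dyadics le_rfl
    have := hB q hq 1 one_mem_dyadics hq1 t ht
    linarith

/-- **Continuity of the extension map.** If `yₙ → y` uniformly in `t` at each dyadic
rational `r`, with all functions nondecreasing in `r`, then the extensions `ỹₙ`
converge to `ỹ` in the (uniform-in-`t`) Lévy-distance sense. -/
theorem rcExt_continuous
    (y : ℝ → ℝ → ℝ) (yseq : ℕ → ℝ → ℝ → ℝ)
    (hmono : ∀ r₁ ∈ dyadics, ∀ r₂ ∈ dyadics, r₁ ≤ r₂ →
      ∀ t ∈ Set.Icc (0 : ℝ) 1, y r₁ t ≤ y r₂ t)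
    (hmonoseq : ∀ n, ∀ r₁ ∈ dyadics, ∀ r₂ ∈ dyadics, r₁ ≤ r₂ →
      ∀ t ∈ Set.Icc (0 : ℝ) 1, yseq n r₁ t ≤ yseq n r₂ t)
    (hconv : ∀ r ∈ dyadics,
      TendstoUniformlyOn (fun n t => yseq n r t) (fun t => y r t) atTop
        (Set.Icc (0 : ℝ) 1)) :
    ∀ ε > (0 : ℝ), ∃ N : ℕ, ∀ n ≥ N, ∀ t ∈ Set.Icc (0 : ℝ) 1,
      (∀ u ∈ Set.Ico (0 : ℝ) 1,
        rcExt (yseq n) u t ≤ rcExt y (min (u + ε) 1) t + ε ∧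
        rcExt y u t ≤ rcExt (yseq n) (min (u + ε) 1) t + ε) ∧
      (∀ u ∈ Set.Icc ε 1,
        rcExt (yseq n) u t ≥ rcExt y (u - ε) t - ε ∧
        rcExt y u t ≥ rcExt (yseq n) (u - ε) t - ε) := by
  intro ε hε
  -- choose the mesh
  obtain ⟨m₀, hm₀⟩ := exists_pow_lt_of_lt_one hε (show (1:ℝ)/2 < 1 by norm_num)
  set m := m₀ + 1 with hm_def
  have hm1 : 1 ≤ m := Nat.le_add_left 1 m₀
  have hmesh : (1 : ℝ) / 2 ^ m < ε := by
    have h1 : ((1:ℝ)/2) ^ m ≤ ((1:ℝ)/2) ^ m₀ :=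
      pow_le_pow_of_le_one (by norm_num) (by norm_num) (by omega)
    have h2 : ((1:ℝ)/2) ^ m = 1 / 2 ^ m := by rw [div_pow]; norm_num
    linarith [h1.trans_lt hm₀, h2]
  -- choose N from uniform convergence at the grid points
  have hev : ∀ᶠ n in atTop, ∀ k ∈ Finset.range (2 ^ m + 1), ∀ t ∈ Set.Icc (0:ℝ) 1,
      dist (y ((k:ℝ)/2^m) t) (yseq n ((k:ℝ)/2^m) t) < ε := by
    rw [Filter.eventually_all_finset]
    intro k hk
    have hk' : k ≤ 2 ^ m := by simpa using Nat.lt_succ_iff.mp (Finset.mem_range.mp hk)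
    exact (Metric.tendstoUniformlyOn_iff.mp (hconv _ (grid_mem_dyadics hm1 hk'))) ε hε
  obtain ⟨N, hN⟩ := Filter.eventually_atTop.mp hev
  refine ⟨N, fun n hn t ht => ?_⟩
  -- the two-sided estimate at grid points
  have hclose : ∀ k : ℕ, k ≤ 2 ^ m →
      yseq n ((k:ℝ)/2^m) t ≤ y ((k:ℝ)/2^m) t + ε ∧
      y ((k:ℝ)/2^m) t ≤ yseq n ((k:ℝ)/2^m) t + ε := by
    intro k hk
    have := hN n hn k (Finset.mem_range.mpr (Nat.lt_succ_of_le hk)) t ht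
    rw [Real.dist_eq, abs_sub_lt_iff] at this
    constructor <;> linarith [this.1, this.2]
  constructor
  · intro u hu
    obtain ⟨hu0, hu1⟩ := hu
    obtain ⟨k, hk, hak, hka⟩ := grid_succ m hu0 hu1
    set q : ℝ := (k:ℝ)/2^m with hq_def
    have hqd : q ∈ dyadics := grid_mem_dyadics hm1 hk
    have hq1 : q ≤ 1 := dyadics_le_one hqd
    have hqr : ∀ r ∈ dyadics, min (u + ε) 1 ≤ r → q ≤ r := by
      intro r hr hbr
      rcases le_or_gt (u + ε) 1 with h | h
      · rw [min_eq_left h] at hbr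
        linarith
      · rw [min_eq_right h.le] at hbr
        linarith
    have hb1 : min (u + ε) 1 ≤ 1 := min_le_right _ _
    exact ⟨rcExt_key (yseq n) y (hmonoseq n) hmono ht hqd (hclose k hk).1 hu0 hu1 hb1 hak hqr,
      rcExt_key y (yseq n) hmono (hmonoseq n) ht hqd (hclose k hk).2 hu0 hu1 hb1 hak hqr⟩
  · intro u hu
    obtain ⟨huε, hu1⟩ := hu
    have ha0 : (0:ℝ) ≤ u - ε := by linarith
    have ha1 : u - ε < 1 := by linarith
    obtain ⟨k, hk, hak, hka⟩ := grid_succ m ha0 ha1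
    set q : ℝ := (k:ℝ)/2^m with hq_def
    have hqd : q ∈ dyadics := grid_mem_dyadics hm1 hk
    have hqr : ∀ r ∈ dyadics, u ≤ r → q ≤ r := by
      intro r hr hbr
      linarith
    constructor
    · have := rcExt_key y (yseq n) hmono (hmonoseq n) ht hqd (hclose k hk).2 ha0 ha1 hu1 hak hqr
      linarith
    · have := rcExt_key (yseq n) y (hmonoseq n) hmono ht hqd (hclose k hk).1 ha0 ha1 hu1 hak hqr
      linarith

end
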